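/- For every x with 0.373 < x < π/2, one has (8 + a(x))/(π² − 4x²) < (tan x)/x, where a(x) = (8/π)(π/2 − x) + (16/π² − 8/3)(π/2 − x)². -/

import Mathlib

open Real

private lemma nonneg_of_deriv_aux (f f' : ℝ → ℝ) (hder : ∀ z, HasDerivAt f (f' z) z)
    (h0 : f 0 = 0) (hpos : ∀ z, 0 ≤ z → 0 ≤ f' z) {y : ℝ} (hy : 0 ≤ y) : 0 ≤ f y := by
  have hmono : MonotoneOn f (Set.Ici 0) := by
    apply monotoneOn_of_deriv_nonneg (convex_Ici 0)
    · exact fun z _ => (hder z).differentiableAt.continuousAt.continuousWithinAt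
    · intro z _
      exact (hder z).differentiableAt.differentiableWithinAt
    · intro z hz
      rw [interior_Ici] at hz
      rw [(hder z).deriv]
      exact hpos z hz.le
  have := hmono (Set.mem_Ici.2 le_rfl) (Set.mem_Ici.2 hy) hy
  rwa [h0] at this

private lemma sin_ge_cubic {y : ℝ} (hy : 0 ≤ y) : y - y ^ 3 / 6 ≤ Real.sin y := by
  have h := nonneg_of_deriv_aux (fun u => Real.sin u - (u - u ^ 3 / 6))
      (fun u => Real.cos u - (1 - u ^ 2 / 2)) ?_ (by norm_num) ?_ hy
  · simpa using h
  · intro z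
    have h1 := Real.hasDerivAt_sin z
    have h2 : HasDerivAt (fun u : ℝ => u - u ^ 3 / 6) (1 - z ^ 2 / 2) z := by
      have h3 : HasDerivAt (fun u : ℝ => u ^ 3) (3 * z ^ 2) z := by
        simpa using hasDerivAt_pow 3 z
      have := (hasDerivAt_id z).sub (h3.div_const 6)
      exact this.congr_deriv (by ring)
    exact h1.sub h2
  · intro z _
    have := Real.one_sub_sq_div_two_le_cos (x := z)
    linarith

private lemma cos_le_quartic {y : ℝ} (hy : 0 ≤ y) :
    Real.cos y ≤ 1 - y ^ 2 / 2 + y ^ 4 / 24 := by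
  have h := nonneg_of_deriv_aux (fun u => 1 - u ^ 2 / 2 + u ^ 4 / 24 - Real.cos u)
      (fun u => Real.sin u - (u - u ^ 3 / 6)) ?_ (by norm_num) ?_ hy
  · simpa using h
  · intro z
    have h1 : HasDerivAt (fun u : ℝ => 1 - u ^ 2 / 2 + u ^ 4 / 24)
        (-z + z ^ 3 / 6) z := by
      have h2 : HasDerivAt (fun u : ℝ => u ^ 2) (2 * z) z := by
        simpa using hasDerivAt_pow 2 z
      have h3 : HasDerivAt (fun u : ℝ => u ^ 4) (4 * z ^ 3) z := by
        simpa using hasDerivAt_pow 4 z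
      have := ((hasDerivAt_const z (1:ℝ)).sub (h2.div_const 2)).add (h3.div_const 24)
      exact this.congr_deriv (by ring)
    have := h1.sub (Real.hasDerivAt_cos z)
    exact this.congr_deriv (by ring)
  · intro z hz
    have := sin_ge_cubic hz
    linarith

private lemma sin_le_quintic {y : ℝ} (hy : 0 ≤ y) :
    Real.sin y ≤ y - y ^ 3 / 6 + y ^ 5 / 120 := by
  have h := nonneg_of_deriv_aux (fun u => u - u ^ 3 / 6 + u ^ 5 / 120 - Real.sin u)
      (fun u => 1 - u ^ 2 / 2 + u ^ 4 / 24 - Real.cos u) ?_ (by norm_num) ?_ hy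
  · simpa using h
  · intro z
    have h1 : HasDerivAt (fun u : ℝ => u - u ^ 3 / 6 + u ^ 5 / 120)
        (1 - z ^ 2 / 2 + z ^ 4 / 24) z := by
      have h3 : HasDerivAt (fun u : ℝ => u ^ 3) (3 * z ^ 2) z := by
        simpa using hasDerivAt_pow 3 z
      have h5 : HasDerivAt (fun u : ℝ => u ^ 5) (5 * z ^ 4) z := by
        simpa using hasDerivAt_pow 5 z
      have := ((hasDerivAt_id z).sub (h3.div_const 6)).add (h5.div_const 120)
      exact this.congr_deriv (by ring)
    have := h1.sub (Real.hasDerivAt_sin z)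
    exact this.congr_deriv (by ring)
  · intro z hz
    have := cos_le_quartic hz
    linarith

private lemma cos_ge_sextic {y : ℝ} (hy : 0 ≤ y) :
    1 - y ^ 2 / 2 + y ^ 4 / 24 - y ^ 6 / 720 ≤ Real.cos y := by
  have h := nonneg_of_deriv_aux
      (fun u => Real.cos u - (1 - u ^ 2 / 2 + u ^ 4 / 24 - u ^ 6 / 720))
      (fun u => u - u ^ 3 / 6 + u ^ 5 / 120 - Real.sin u) ?_ (by norm_num) ?_ hy
  · simpa using h
  · intro z
    have h1 : HasDerivAt (fun u : ℝ => 1 - u ^ 2 / 2 + u ^ 4 / 24 - u ^ 6 / 720)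
        (-z + z ^ 3 / 6 - z ^ 5 / 120) z := by
      have h2 : HasDerivAt (fun u : ℝ => u ^ 2) (2 * z) z := by
        simpa using hasDerivAt_pow 2 z
      have h4 : HasDerivAt (fun u : ℝ => u ^ 4) (4 * z ^ 3) z := by
        simpa using hasDerivAt_pow 4 z
      have h6 : HasDerivAt (fun u : ℝ => u ^ 6) (6 * z ^ 5) z := by
        simpa using hasDerivAt_pow 6 z
      have := (((hasDerivAt_const z (1:ℝ)).sub (h2.div_const 2)).add
        (h4.div_const 24)).sub (h6.div_const 720)
      exact this.congr_deriv (by ring)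
    have := (Real.hasDerivAt_cos z).sub h1
    exact this.congr_deriv (by ring)
  · intro z hz
    have := sin_le_quintic hz
    linarith

set_option maxHeartbeats 1000000 in
private lemma Hpos_aux (t : ℝ) (ht0 : 0 ≤ t) (ht1 : t ≤ 1.198) :
    0 < (16 - 4 * π ^ 2 / 3) - (4 * π ^ 3 / 45) * t + ((14 / 45) * π ^ 2 - 8 / 3) * t ^ 2
      + (π ^ 3 / 180) * t ^ 3 + (2 / 15 - π ^ 2 / 60) * t ^ 4 := by
  have h1 := Real.pi_gt_d6
  have h2 := Real.pi_lt_d6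
  have hp2 : π ^ 2 < 9.8696067 := by nlinarith
  have hp2' : 9.86960 < π ^ 2 := by nlinarith
  have hp3 : π ^ 3 < 31.006287 := by nlinarith
  have hp3' : 31.006257 < π ^ 3 := by nlinarith
  have ha : (0:ℝ) ≤ 1.198 - t := by linarith
  nlinarith [mul_nonneg ha ht0, mul_nonneg (mul_nonneg ha ha) ht0,
    mul_nonneg ha (mul_nonneg ht0 ht0), mul_nonneg (mul_nonneg ha ht0) (mul_nonneg ht0 ht0),
    mul_nonneg ha ha, mul_nonneg (mul_nonneg ha ha) (mul_nonneg ht0 ht0),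
    mul_nonneg (mul_nonneg ht0 ht0) ht0, sq_nonneg t,
    mul_nonneg (mul_nonneg ha ht0) ht0,
    mul_nonneg (sub_nonneg.2 hp3.le) ht0, mul_nonneg (sub_nonneg.2 hp3'.le) (mul_nonneg (mul_nonneg ht0 ht0) ht0),
    mul_nonneg (sub_nonneg.2 hp2'.le) (mul_nonneg ht0 ht0),
    mul_nonneg (sub_nonneg.2 hp2.le) (mul_nonneg (mul_nonneg ht0 ht0) (mul_nonneg ht0 ht0))]

set_option maxHeartbeats 1000000 in
private lemma key_aux (t : ℝ) (ht0 : 0 < t) (ht1 : t ≤ 1.198) :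
    (8 + (8 / π * t + (16 / π ^ 2 - 8 / 3) * t ^ 2)) * (π / 2 - t)
        * (t - t ^ 3 / 6 + t ^ 5 / 120)
      < (1 - t ^ 2 / 2 + t ^ 4 / 24 - t ^ 6 / 720) * (4 * t * (π - t)) := by
  have hπ : 0 < π := Real.pi_pos
  have hH := Hpos_aux t ht0.le ht1
  have hπ2 : 0 < π ^ 2 := by positivity
  have hid : π ^ 2 * ((1 - t ^ 2 / 2 + t ^ 4 / 24 - t ^ 6 / 720) * (4 * t * (π - t))
      - (8 + (8 / π * t + (16 / π ^ 2 - 8 / 3) * t ^ 2)) * (π / 2 - t)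
        * (t - t ^ 3 / 6 + t ^ 5 / 120))
      = t ^ 4 * ((16 - 4 * π ^ 2 / 3) - (4 * π ^ 3 / 45) * t
        + ((14 / 45) * π ^ 2 - 8 / 3) * t ^ 2 + (π ^ 3 / 180) * t ^ 3
        + (2 / 15 - π ^ 2 / 60) * t ^ 4) := by
    field_simp
    ring
  have h4 : 0 < π ^ 2 * ((1 - t ^ 2 / 2 + t ^ 4 / 24 - t ^ 6 / 720) * (4 * t * (π - t))
      - (8 + (8 / π * t + (16 / π ^ 2 - 8 / 3) * t ^ 2)) * (π / 2 - t)
        * (t - t ^ 3 / 6 + t ^ 5 / 120)) := by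
    rw [hid]
    exact mul_pos (pow_pos ht0 4) hH
  have h5 := mul_pos_iff.mp h4
  rcases h5 with ⟨-, h6⟩ | ⟨h7, -⟩
  · linarith
  · exact absurd h7 (not_lt.mpr (by positivity))

set_option maxHeartbeats 1000000 in
theorem stmt3 (x : ℝ) (h0 : 0.373 < x) (h1 : x < π / 2) :
    (8 + ((8 / π) * (π / 2 - x) + (16 / π ^ 2 - 8 / 3) * (π / 2 - x) ^ 2)) /
      (π ^ 2 - 4 * x ^ 2) < Real.tan x / x := by
  have hπ1 := Real.pi_gt_d6
  have hπ2 := Real.pi_lt_d6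
  have hπ : 0 < π := Real.pi_pos
  have hx0 : (0:ℝ) < x := lt_trans (by norm_num) h0
  have hden : 0 < π ^ 2 - 4 * x ^ 2 := by
    nlinarith [mul_pos (show 0 < π - 2 * x by linarith) (show 0 < π + 2 * x by linarith)]
  have hcos : 0 < Real.cos x := Real.cos_pos_of_mem_Ioo ⟨by linarith, h1⟩
  rw [Real.tan_eq_sin_div_cos, div_div, div_lt_div_iff₀ hden (by positivity : 0 < Real.cos x * x)]
  set t := π / 2 - x with ht
  have ht0 : 0 < t := by rw [ht]; linarith
  have ht1 : t ≤ 1.198 := by rw [ht]; linarith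
  have hsx : Real.sin x = Real.cos t := by rw [ht]; exact (Real.cos_pi_div_two_sub x).symm
  have hcx : Real.cos x = Real.sin t := by rw [ht]; exact (Real.sin_pi_div_two_sub x).symm
  have e1 : π ^ 2 - 4 * x ^ 2 = 4 * t * (π - t) := by rw [ht]; ring
  have e2 : x = π / 2 - t := by rw [ht]; ring
  rw [hsx, hcx, e1, e2]
  have hsu := sin_le_quintic ht0.le
  have hcl := cos_ge_sextic ht0.le
  have hkey := key_aux t ht0 ht1
  have hQ : 0 ≤ (8 + (8 / π * t + (16 / π ^ 2 - 8 / 3) * t ^ 2)) * (π / 2 - t) := by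
    have hq1 : 0 ≤ 8 / π * t := by positivity
    have hq2 : 0 ≤ 16 / π ^ 2 * t ^ 2 := by positivity
    have hq3 : 0 ≤ 8 + (8 / π * t + (16 / π ^ 2 - 8 / 3) * t ^ 2) := by
      nlinarith [hq1, hq2, mul_nonneg (show (0:ℝ) ≤ 1.198 - t by linarith) ht0.le]
    have hq4 : 0 ≤ π / 2 - t := by linarith
    exact mul_nonneg hq3 hq4
  have hπt : (0:ℝ) ≤ π - t := by nlinarith
  have hP : 0 ≤ 4 * t * (π - t) := mul_nonneg (by linarith) hπt
  linarith [hkey, mul_nonneg hQ (sub_nonneg.2 hsu),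
    mul_nonneg hP (sub_nonneg.2 hcl)]
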